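/- Let S be an arc of F_q^k with |S| ≥ k and t = q+k−1−|S| ≥ 0, let A be a subset of S of size k−2 with a fixed ordering (p_1, …, p_{k−2}), let f_A be a tangent polynomial for A, and let E be a subset of S of size t+k−1 with A ⊆ E. Then for every x ∈ F_q^k, f_A(x) = Σ_{e ∈ E∖A} f_A(e) · ∏_{u ∈ E∖(A∪{e})} d_A(u,x)/d_A(u,e), where each d_A(u,e) is nonzero since S is an arc. -/

import Mathlib

open Finset

variable {F : Type*} [Field F]

/-- An *arc*: every `k`-subset is a set of linearly independent vectors
(hence a basis of `F^k`). -/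
def IsArc {k : ℕ} (S : Set (Fin k → F)) : Prop :=
  ∀ T : Finset (Fin k → F), ↑T ⊆ S → T.card = k →
    LinearIndependent F (Subtype.val : {x // x ∈ T} → (Fin k → F))

/-- The *weight* of a vector: its number of nonzero coordinates. -/
noncomputable def weight {ι : Type*} (w : ι → F) : ℕ := Nat.card {i // w i ≠ 0}

/-- `det(u, C)`: the determinant of the `k × k` matrix whose first row is `u` and whose
remaining rows are the vectors `g i`, `i ∈ C`, listed in increasing order of the index set. -/
noncomputable def detWith {k m : ℕ} (g : Fin m → Fin k → F)
    (u : Fin k → F) (C : Finset (Fin m)) : F :=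
  if h : C.card + 1 = k then
    Matrix.det (Matrix.of ((Fin.cons u fun j => g (C.orderEmbOfFin rfl j)) ∘ Fin.cast h.symm))
  else 0

/-- The matrix `M_n` associated to an ordered arc `g : Fin m → (Fin k → F)`. -/
noncomputable def arcMatrix {k m : ℕ} (g : Fin m → Fin k → F) (n : ℕ) :
    Matrix {C : Finset (Fin m) // C.card = k - 1}
      {AE : Finset (Fin m) × Finset (Fin m) //
        AE.2.card = m - n ∧ AE.1 ⊆ AE.2 ∧ AE.1.card = k - 2} F :=
  fun C AE =>
    if AE.1.1 ⊆ C.1 then ∏ u ∈ Finset.univ \ AE.1.2, detWith g (g u) C.1 else 0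

/-- `det(z, Y₁, …, Y_{k-1})`. -/
noncomputable def detRows {k : ℕ} (z : Fin k → F) (Y : Fin (k - 1) → Fin k → F) : F :=
  if h : k - 1 + 1 = k then Matrix.det (Matrix.of ((Fin.cons z Y) ∘ Fin.cast h.symm)) else 0

/-- `d_A(u,v) = det(u, v, p₁, …, p_{k-2})` for an ordered tuple `A = (p₁, …, p_{k-2})`. -/
noncomputable def dA {k : ℕ} (p : Fin (k - 2) → Fin k → F) (u v : Fin k → F) : F :=
  if h : k - 2 + 1 + 1 = k then
    Matrix.det (Matrix.of ((Fin.cons u (Fin.cons v p)) ∘ Fin.cast h.symm))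
  else 0

/-- `f` is a tangent polynomial for the `(k-2)`-subset `A` of the arc `S`:
a product of `t` pairwise linearly independent linear forms whose kernels meet `S` in `A`. -/
def IsTangentPoly {k : ℕ} (t : ℕ) (S A : Set (Fin k → F)) (f : (Fin k → F) → F) : Prop :=
  ∃ α : Fin t → ((Fin k → F) →ₗ[F] F),
    (∀ i j, i ≠ j → LinearIndependent F ![α i, α j]) ∧
    (∀ i, S ∩ {x | α i x = 0} = A) ∧
    ∀ x, f x = ∏ i, α i x

/-- Compatible families `(α_A)` (on `(k-2)`-subsets) and `(α_C)` (on `(k-1)`-subsets)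
of nonzero scalars, relative to the tangent polynomials `f`. -/
def CompatibleFamilies {k m : ℕ} (t : ℕ) (g : Fin m → Fin k → F)
    (f : Finset (Fin m) → (Fin k → F) → F) (a c : Finset (Fin m) → F) : Prop :=
  (∀ A : Finset (Fin m), A.card = k - 2 → a A ≠ 0) ∧
  (∀ C : Finset (Fin m), C.card = k - 1 → c C ≠ 0) ∧
  ∀ A : Finset (Fin m), A.card = k - 2 → ∀ e, e ∉ A →
    c (insert e A) =
      (-1 : F) ^ ((A.filter fun i => e < i).card * (t + 1)) * a A * f A (g e)

/-- The polynomial `φ(Y₁, …, Y_{k-1}) = Σ_C (α_C)^e ∏_{z ∈ E∖C} det(z,Y)/det(z,C)`. -/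
noncomputable def phiPoly {k M : ℕ} (e : ℕ) (g : Fin M → Fin k → F)
    (c : Finset (Fin M) → F) (E : Finset (Fin M)) (Y : Fin (k - 1) → Fin k → F) : F :=
  ∑ C ∈ E.powersetCard (k - 1), (c C) ^ e *
    ∏ z ∈ E \ C, detRows (g z) Y / detWith g (g z) C

/-- `(G, n)` has *Property W*. -/
def PropertyW {k m : ℕ} (g : Fin m → Fin k → F) (n : ℕ) : Prop :=
  ∀ A : Finset (Fin m), A.card = k - 2 →
    ∃ (C : Finset (Fin m)) (Cs : Fin (m - n - k + 1) → Finset (Fin m)),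
      C.card = k - 1 ∧ A ⊆ C ∧
      (∀ i, (Cs i).card = k - 1 ∧ A ⊆ Cs i ∧ Cs i ≠ C) ∧
      Function.Injective Cs ∧
      ∀ i, ∃ x, ∀ D : {C : Finset (Fin m) // C.card = k - 1},
        ((arcMatrix g n).mulVec x) D ≠ 0 ↔ (D.1 = C ∨ D.1 = Cs i)


section AuxCore
open Polynomial
variable {ι : Type*} [DecidableEq ι]

lemma aux_lag_eval (s : Finset ι) (v : ι → F) (hv : Set.InjOn v ↑s) (f : F[X])
    (hf : f.degree < s.card) (T : F) :
    f.eval T = ∑ e ∈ s, f.eval (v e) * ∏ u ∈ s.erase e, (T - v u) / (v e - v u) := by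
  conv_lhs => rw [Lagrange.eq_interpolate hv hf]
  rw [Lagrange.interpolate_apply, eval_finset_sum]
  refine Finset.sum_congr rfl fun e he => ?_
  rw [eval_mul, eval_C, Lagrange.basis, eval_prod]
  congr 1
  refine Finset.prod_congr rfl fun u hu => ?_
  rw [Lagrange.basisDivisor, eval_mul, eval_C, eval_sub, eval_X, eval_C]
  rw [div_eq_inv_mul]

lemma aux_lag_coeff {n : ℕ} (s : Finset ι) (hs : s.card = n + 1) (v : ι → F)
    (hv : Set.InjOn v ↑s) (f : F[X]) (hf : f.degree < s.card) :
    f.coeff n = ∑ e ∈ s, f.eval (v e) * ∏ u ∈ s.erase e, (v e - v u)⁻¹ := by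
  conv_lhs => rw [Lagrange.eq_interpolate hv hf]
  rw [Lagrange.interpolate_apply, finset_sum_coeff]
  refine Finset.sum_congr rfl fun e he => ?_
  rw [coeff_C_mul]
  congr 1
  have hbasis : Lagrange.basis s v e =
      C (∏ u ∈ s.erase e, (v e - v u)⁻¹) * ∏ u ∈ s.erase e, (X - C (v u)) := by
    rw [Lagrange.basis]
    simp_rw [Lagrange.basisDivisor]
    rw [Finset.prod_mul_distrib, map_prod]
  rw [hbasis, coeff_C_mul]
  have hmonic : (∏ u ∈ s.erase e, (X - C (v u))).Monic :=
    monic_prod_of_monic _ _ fun u _ => monic_X_sub_C _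
  have hdeg : (∏ u ∈ s.erase e, (X - C (v u))).natDegree = n := by
    rw [natDegree_prod_of_monic _ _ fun u _ => monic_X_sub_C _]
    simp [Finset.card_erase_of_mem he, hs]
  have : (∏ u ∈ s.erase e, (X - C (v u))).coeff n = 1 := by
    rw [← hdeg]; exact hmonic.coeff_natDegree
  rw [this, mul_one]

lemma aux_core_special {n : ℕ} (s : Finset ι) (hs : s.card = n + 1) (lam mu : ι → F)
    (hlam : ∀ e ∈ s, lam e ≠ 0)
    (hcross : ∀ u ∈ s, ∀ e ∈ s, u ≠ e → mu u * lam e - lam u * mu e ≠ 0)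
    (a b : Fin n → F) (P Q : F) :
    ∏ i, (a i * P + b i * Q) =
      ∑ e ∈ s, (∏ i, (a i * lam e + b i * mu e)) *
        ∏ u ∈ s.erase e, (mu u * P - lam u * Q) / (mu u * lam e - lam u * mu e) := by
  set v : ι → F := fun e => mu e / lam e with hvdef
  have hv : Set.InjOn v ↑s := by
    intro u hu e he huv
    by_contra hne
    apply hcross u hu e he hne
    have h1 := hlam u hu; have h2 := hlam e he
    simp only [hvdef] at huv
    rw [div_eq_div_iff h1 h2] at huv
    linear_combination huv
  set f : F[X] := ∏ i : Fin n, (C (a i) + C (b i) * Polynomial.X) with hfdef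
  have hfdeg : f.degree < s.card := by
    rw [hs]
    have h1 : f.degree ≤ ∑ i : Fin n, (C (a i) + C (b i) * Polynomial.X).degree :=
      degree_prod_le _ _
    have h2 : ∑ i : Fin n, (C (a i) + C (b i) * Polynomial.X).degree ≤ (n : WithBot ℕ) := by
      calc ∑ i : Fin n, (C (a i) + C (b i) * Polynomial.X).degree
          ≤ ∑ _i : Fin n, (1 : WithBot ℕ) := by
            refine Finset.sum_le_sum fun i _ => ?_
            refine le_trans (degree_add_le _ _) ?_
            simp only [max_le_iff]
            refine ⟨le_trans degree_C_le (by norm_num), ?_⟩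
            refine le_trans (degree_mul_le _ _) ?_
            refine le_trans (add_le_add degree_C_le le_rfl) (by simp)
        _ = (n : WithBot ℕ) := by
            rw [Finset.sum_const, Finset.card_univ, Fintype.card_fin]
            simp [nsmul_eq_mul]
    exact lt_of_le_of_lt (h1.trans h2) (by exact_mod_cast Nat.lt_succ_self n)
  have hevalf : ∀ T : F, f.eval T = ∏ i, (a i + b i * T) := by
    intro T; rw [hfdef, eval_prod]; simp
  have hcoefff : f.coeff n = ∏ i, b i := by
    have h1 : ∀ q ∈ (univ : Finset (Fin n)),
        (C (a q) + C (b q) * Polynomial.X).natDegree ≤ 1 := by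
      intro q _
      refine le_trans (natDegree_add_le _ _) ?_
      simp only [max_le_iff]
      refine ⟨le_trans (natDegree_C _).le (by norm_num), ?_⟩
      refine le_trans natDegree_mul_le (by simp)
    have h2 := coeff_prod_of_natDegree_le Finset.univ (fun i : Fin n => C (a i) + C (b i) * Polynomial.X) 1 h1
    simp only [Finset.card_univ, Fintype.card_fin, mul_one] at h2
    rw [hfdef, h2]
    refine Finset.prod_congr rfl fun i _ => ?_
    simp [coeff_C]
  
  have hcard : ∀ e ∈ s, (s.erase e).card = n := by
    intro e he; rw [Finset.card_erase_of_mem he, hs]; omega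
  have hvu : ∀ u ∈ s, lam u * v u = mu u := by
    intro u hu
    have l1 := hlam u hu
    simp only [hvdef]
    field_simp
  have hvsub : ∀ u ∈ s, ∀ e ∈ s, u ≠ e → v e - v u ≠ 0 := by
    intro u hu e he hne
    exact sub_ne_zero.mpr fun h => hne (hv he hu h).symm
  have hval : ∀ e ∈ s, ∏ i, (a i * lam e + b i * mu e) = lam e ^ n * f.eval (v e) := by
    intro e he
    rw [hevalf]
    have hc : lam e ^ n = ∏ _i : Fin n, lam e := by simp
    rw [hc, ← Finset.prod_mul_distrib]
    refine Finset.prod_congr rfl fun i _ => ?_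
    linear_combination (-(b i)) * hvu e he
  have hnum : ∀ u ∈ s, ∀ P Q : F, mu u * P - lam u * Q = lam u * (v u * P - Q) := by
    intro u hu P' Q'
    linear_combination (-P') * hvu u hu
  have hden : ∀ u ∈ s, ∀ e ∈ s, mu u * lam e - lam u * mu e = lam u * lam e * (v u - v e) := by
    intro u hu e he
    linear_combination (-lam e) * hvu u hu + lam u * hvu e he
  rcases eq_or_ne P 0 with hP | hP
  · subst hP
    have hterm : ∀ e ∈ s,
        (∏ i, (a i * lam e + b i * mu e)) *
          ∏ u ∈ s.erase e, (mu u * 0 - lam u * Q) / (mu u * lam e - lam u * mu e) =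
        Q ^ n * (f.eval (v e) * ∏ u ∈ s.erase e, (v e - v u)⁻¹) := by
      intro e he
      have h2 : ∏ u ∈ s.erase e, (mu u * 0 - lam u * Q) / (mu u * lam e - lam u * mu e) =
          ∏ u ∈ s.erase e, (Q / lam e * (v e - v u)⁻¹) := by
        refine Finset.prod_congr rfl fun u hu => ?_
        have hu' : u ∈ s := Finset.mem_of_mem_erase hu
        have hne : u ≠ e := Finset.ne_of_mem_erase hu
        have d2 := hvsub u hu' e he hne
        have d3 : v u - v e ≠ 0 := sub_ne_zero.mpr fun h => hne (hv hu' he h)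
        have l1 := hlam u hu'; have l2 := hlam e he
        rw [hnum u hu' 0 Q, hden u hu' e he]
        field_simp
        ring
      rw [hval e he, h2, Finset.prod_mul_distrib, Finset.prod_const, hcard e he, div_pow]
      have l2 := hlam e he
      have hpow : lam e ^ n * (Q ^ n / lam e ^ n) = Q ^ n := by
        field_simp
      linear_combination (f.eval (v e) * ∏ u ∈ s.erase e, (v e - v u)⁻¹) * hpow
    rw [Finset.sum_congr rfl hterm, ← Finset.mul_sum,
      ← aux_lag_coeff s hs v hv f hfdeg, hcoefff]
    calc ∏ i, (a i * 0 + b i * Q) = ∏ i, (b i * Q) := by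
          refine Finset.prod_congr rfl fun i _ => by ring
      _ = (∏ i, b i) * Q ^ n := by rw [Finset.prod_mul_distrib]; simp
      _ = Q ^ n * ∏ i, b i := mul_comm _ _
  · have hterm : ∀ e ∈ s,
        (∏ i, (a i * lam e + b i * mu e)) *
          ∏ u ∈ s.erase e, (mu u * P - lam u * Q) / (mu u * lam e - lam u * mu e) =
        P ^ n * (f.eval (v e) * ∏ u ∈ s.erase e, (Q / P - v u) / (v e - v u)) := by
      intro e he
      have h2 : ∏ u ∈ s.erase e, (mu u * P - lam u * Q) / (mu u * lam e - lam u * mu e) =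
          ∏ u ∈ s.erase e, (P / lam e * ((Q / P - v u) / (v e - v u))) := by
        refine Finset.prod_congr rfl fun u hu => ?_
        have hu' : u ∈ s := Finset.mem_of_mem_erase hu
        have hne : u ≠ e := Finset.ne_of_mem_erase hu
        have d2 := hvsub u hu' e he hne
        have d3 : v u - v e ≠ 0 := sub_ne_zero.mpr fun h => hne (hv hu' he h)
        have l1 := hlam u hu'; have l2 := hlam e he
        rw [hnum u hu' P Q, hden u hu' e he]
        field_simp
        ring
      rw [hval e he, h2, Finset.prod_mul_distrib, Finset.prod_const, hcard e he, div_pow]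
      have l2 := hlam e he
      have hpow : lam e ^ n * (P ^ n / lam e ^ n) = P ^ n := by
        field_simp
      linear_combination (f.eval (v e) * ∏ u ∈ s.erase e, (Q / P - v u) / (v e - v u)) * hpow
    rw [Finset.sum_congr rfl hterm, ← Finset.mul_sum,
      ← aux_lag_eval s v hv f hfdeg (Q / P), hevalf]
    have hc : P ^ n = ∏ _i : Fin n, P := by simp
    rw [hc, ← Finset.prod_mul_distrib]
    refine Finset.prod_congr rfl fun i _ => ?_
    field_simp

lemma aux_core_general [Fintype F] {n : ℕ} (s : Finset ι) (hs : s.card = n + 1)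
    (hn : n < Fintype.card F) (lam mu : ι → F)
    (hcross : ∀ u ∈ s, ∀ e ∈ s, u ≠ e → mu u * lam e - lam u * mu e ≠ 0)
    (a b : Fin n → F) (P Q : F) :
    ∏ i, (a i * P + b i * Q) =
      ∑ e ∈ s, (∏ i, (a i * lam e + b i * mu e)) *
        ∏ u ∈ s.erase e, (mu u * P - lam u * Q) / (mu u * lam e - lam u * mu e) := by
  classical
  rcases Nat.eq_zero_or_pos n with hn0 | hn0
  · subst hn0
    obtain ⟨e, rfl⟩ := Finset.card_eq_one.mp hs
    simp
  have hnz : ∀ e ∈ s, ¬(lam e = 0 ∧ mu e = 0) := by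
    intro e he ⟨hl, hm⟩
    obtain ⟨u, hu, hune⟩ := Finset.exists_mem_ne (by rw [hs]; omega) e
    exact hcross u hu e he hune (by rw [hl, hm]; ring)
  set ψ : ι → Option F := fun e => if mu e = 0 then none else some (-(lam e) / mu e) with hψ
  have hinj : Set.InjOn ψ ↑s := by
    intro u hu e he h
    by_contra hne
    apply hcross u hu e he hne
    by_cases h1 : mu u = 0 <;> by_cases h2 : mu e = 0
    · rw [h1, h2]; ring
    · simp [hψ, h1, h2] at h
    · simp [hψ, h1, h2] at h
    · simp only [hψ, if_neg h1, if_neg h2, Option.some.injEq] at h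
      field_simp at h
      linear_combination h
  have hex : ∃ o : Option F, o ∉ s.image ψ := by
    by_contra hall
    push_neg at hall
    have hsub : (univ : Finset (Option F)) ⊆ s.image ψ := fun o _ => hall o
    have hcardle := Finset.card_le_card hsub
    rw [Finset.card_image_of_injOn hinj, hs, Finset.card_univ, Fintype.card_option] at hcardle
    omega
  obtain ⟨o, ho⟩ := hex
  have hmain : ∃ sC rC s' r' : F,
      (sC * r' - rC * s' = 1) ∧ ∀ e ∈ s, sC * lam e + rC * mu e ≠ 0 := by
    cases o with
    | none =>
      refine ⟨0, 1, -1, 0, by ring, ?_⟩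
      intro e he h
      simp only [zero_mul, one_mul, zero_add] at h
      exact ho (Finset.mem_image.mpr ⟨e, he, by simp [hψ, h]⟩)
    | some c =>
      refine ⟨1, c, 0, 1, by ring, ?_⟩
      intro e he h
      simp only [one_mul] at h
      by_cases hm : mu e = 0
      · exact hnz e he ⟨by rw [hm] at h; linear_combination h, hm⟩
      · refine ho (Finset.mem_image.mpr ⟨e, he, ?_⟩)
        simp only [hψ]
        rw [if_neg hm]
        simp only [Option.some.injEq]
        field_simp
        linear_combination -h
  obtain ⟨sC, rC, s', r', hdet, hgood⟩ := hmain
  set lam' : ι → F := fun e => sC * lam e + rC * mu e with hlam'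
  set mu' : ι → F := fun e => s' * lam e + r' * mu e with hmu'
  set a' : Fin n → F := fun i => a i * r' - b i * s' with ha'
  set b' : Fin n → F := fun i => -(a i * rC) + b i * sC with hb'
  have hcross' : ∀ u ∈ s, ∀ e ∈ s, u ≠ e → mu' u * lam' e - lam' u * mu' e ≠ 0 := by
    intro u hu e he hne h
    apply hcross u hu e he hne
    have : mu' u * lam' e - lam' u * mu' e = mu u * lam e - lam u * mu e := by
      simp only [hlam', hmu']
      linear_combination (mu u * lam e - lam u * mu e) * hdet
    rw [← this, h]
  have key := aux_core_special s hs lam' mu' (fun e he => hgood e he) hcross' a' b'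
    (sC * P + rC * Q) (s' * P + r' * Q)
  have hlhs : ∏ i, (a' i * (sC * P + rC * Q) + b' i * (s' * P + r' * Q)) =
      ∏ i, (a i * P + b i * Q) := by
    refine Finset.prod_congr rfl fun i _ => ?_
    simp only [ha', hb']
    linear_combination (a i * P + b i * Q) * hdet
  rw [hlhs] at key
  rw [key]
  refine Finset.sum_congr rfl fun e he => ?_
  congr 1
  · refine Finset.prod_congr rfl fun i _ => ?_
    simp only [ha', hb', hlam', hmu']
    linear_combination (a i * lam e + b i * mu e) * hdet
  · refine Finset.prod_congr rfl fun u hu => ?_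
    congr 1
    · simp only [hlam', hmu']
      linear_combination (mu u * P - lam u * Q) * hdet
    · simp only [hlam', hmu']
      linear_combination (mu u * lam e - lam u * mu e) * hdet


end AuxCore

lemma aux_update_cons_one {m : ℕ} {γ : Type*} (u z c : γ) (p : Fin m → γ) :
    Function.update ((Fin.cons u (Fin.cons c p) : Fin (m + 1 + 1) → γ)) 1 z
      = Fin.cons u (Fin.cons z p) := by
  funext j
  refine Fin.cases ?_ (fun i => ?_) j
  · rw [Function.update_of_ne Fin.zero_ne_one', Fin.cons_zero, Fin.cons_zero]
  · refine Fin.cases ?_ (fun i' => ?_) i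
    · rw [Fin.succ_zero_eq_one, Function.update_self]
      rw [← Fin.succ_zero_eq_one, Fin.cons_succ, Fin.cons_zero]
    · rw [Function.update_of_ne (Fin.succ_succ_ne_one i'), Fin.cons_succ, Fin.cons_succ,
        Fin.cons_succ, Fin.cons_succ]

lemma aux_dA_eq_det {m : ℕ} (p : Fin m → Fin (m + 2) → F) (u z : Fin (m + 2) → F) :
    dA (k := m + 2) p u z =
      Matrix.detRowAlternating ((Fin.cons u (Fin.cons z p) : Fin (m + 2) → Fin (m + 2) → F)) := by
  rw [dA, dif_pos (show m + 2 - 2 + 1 + 1 = m + 2 from rfl)]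
  rfl

lemma aux_dA_linear {m : ℕ} (p : Fin m → Fin (m + 2) → F) (u : Fin (m + 2) → F) :
    ∃ β : ((Fin (m + 2) → F) →ₗ[F] F), ∀ z, β z = dA (k := m + 2) p u z := by
  refine ⟨(Matrix.detRowAlternating : (Fin (m+2) → F) [⋀^Fin (m+2)]→ₗ[F] F).toMultilinearMap.toLinearMap
      ((Fin.cons u (Fin.cons 0 p) : Fin (m + 2) → Fin (m + 2) → F)) 1, fun z => ?_⟩
  have h1 : Function.update ((Fin.cons u (Fin.cons 0 p) : Fin (m + 2) → Fin (m + 2) → F)) 1 z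
      = ((Fin.cons u (Fin.cons z p) : Fin (m + 2) → Fin (m + 2) → F)) :=
    aux_update_cons_one u z 0 p
  rw [aux_dA_eq_det, MultilinearMap.toLinearMap_apply, h1]
  rfl

lemma aux_dA_self {m : ℕ} (p : Fin m → Fin (m + 2) → F) (u : Fin (m + 2) → F) :
    dA (k := m + 2) p u u = 0 := by
  rw [aux_dA_eq_det]
  refine Matrix.det_zero_of_row_eq (i := (0 : Fin (m+2))) (j := (1 : Fin (m+2)))
    Fin.zero_ne_one' ?_
  have h0 : ((Fin.cons u (Fin.cons u p) : Fin (m + 2) → Fin (m + 2) → F)) 0 = u :=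
    Fin.cons_zero _ _
  have h1 : ((Fin.cons u (Fin.cons u p) : Fin (m + 2) → Fin (m + 2) → F)) 1 = u := by
    have e1 : (1 : Fin (m + 2)) = Fin.succ 0 := (Fin.succ_zero_eq_one).symm
    rw [e1]
    exact (Fin.cons_succ _ _ _).trans (Fin.cons_zero _ _)
  exact h0.trans h1.symm

lemma aux_dA_pj {m : ℕ} (p : Fin m → Fin (m + 2) → F) (u : Fin (m + 2) → F) (j : Fin m) :
    dA (k := m + 2) p u (p j) = 0 := by
  rw [aux_dA_eq_det]
  refine Matrix.det_zero_of_row_eq (i := (1 : Fin (m+2))) (j := j.succ.succ)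
    (Fin.succ_succ_ne_one j).symm ?_
  have h1 : ((Fin.cons u (Fin.cons (p j) p) : Fin (m + 2) → Fin (m + 2) → F)) 1 = p j := by
    have e1 : (1 : Fin (m + 2)) = Fin.succ 0 := (Fin.succ_zero_eq_one).symm
    rw [e1]
    exact (Fin.cons_succ _ _ _).trans (Fin.cons_zero _ _)
  have h2 : ((Fin.cons u (Fin.cons (p j) p) : Fin (m + 2) → Fin (m + 2) → F)) j.succ.succ = p j :=
    (Fin.cons_succ _ _ _).trans (Fin.cons_succ _ _ _)
  exact h1.trans h2.symm

theorem stmt3 [Fintype F] [DecidableEq F] {k t : ℕ} (hk : 3 ≤ k)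
    (S : Finset (Fin k → F)) (hS : IsArc (↑S : Set (Fin k → F))) (hSk : k ≤ S.card)
    (ht : S.card + t = Fintype.card F + k - 1)
    (p : Fin (k - 2) ↪ (Fin k → F)) (hp : ∀ i, p i ∈ S)
    (fA : (Fin k → F) → F) (hfA : IsTangentPoly t (↑S) (Set.range p) fA)
    (E : Finset (Fin k → F)) (hES : E ⊆ S) (hAE : ∀ i, p i ∈ E)
    (hE : E.card = t + k - 1) (x : Fin k → F) :
    fA x = ∑ e ∈ E \ Finset.univ.image p,
      fA e * ∏ u ∈ E \ insert e (Finset.univ.image p),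
        dA (⇑p) u x / dA (⇑p) u e := by
  classical
  obtain ⟨m, rfl⟩ : ∃ m, k = m + 2 := ⟨k - 2, by omega⟩
  obtain ⟨α, hpairα, hker, hprod⟩ := hfA
  set A : Finset (Fin (m + 2) → F) := Finset.univ.image ⇑p with hA
  have hpinj : Function.Injective ⇑p := p.injective
  have hAcard : A.card = m := by
    rw [hA, Finset.card_image_of_injective _ hpinj, Finset.card_univ, Fintype.card_fin]
    omega
  have hAmem : ∀ a, a ∈ A ↔ ∃ j, p j = a := by
    intro a; rw [hA]; simp
  have hAsubE : A ⊆ E := by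
    intro a ha; obtain ⟨j, rfl⟩ := (hAmem a).mp ha; exact hAE j
  have hAsubS : A ⊆ S := by
    intro a ha; obtain ⟨j, rfl⟩ := (hAmem a).mp ha; exact hp j
  set s : Finset (Fin (m + 2) → F) := E \ A with hsdef
  have hscard : s.card = t + 1 := by
    rw [hsdef, Finset.card_sdiff_of_subset hAsubE, hE, hAcard]; omega
  have hαA : ∀ i j, α i (p j) = 0 := by
    intro i j
    have h1 : (p j : Fin (m + 2) → F) ∈ (↑S : Set (Fin (m + 2) → F)) ∩ {x | α i x = 0} := by
      rw [hker i]; exact ⟨j, rfl⟩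
    exact h1.2
  -- basis extending A by two vectors v w from S
  obtain ⟨T, hAT, hTS, hTcard⟩ :=
    Finset.exists_subsuperset_card_eq hAsubS (by omega : A.card ≤ m + 2) hSk
  have hTind := hS T (Finset.coe_subset.mpr hTS) hTcard
  haveI hTnonempty : Nonempty {x // x ∈ T} := by
    have : T.Nonempty := Finset.card_pos.mp (by omega)
    exact ⟨⟨this.choose, this.choose_spec⟩⟩
  have hTbcard : Fintype.card {x // x ∈ T} = Module.finrank F (Fin (m + 2) → F) := by
    rw [Fintype.card_coe, hTcard, Module.finrank_fintype_fun_eq_card, Fintype.card_fin]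
  set b : Module.Basis {x // x ∈ T} F (Fin (m + 2) → F) :=
    basisOfLinearIndependentOfCardEqFinrank hTind hTbcard with hbdef
  have hb : ∀ i, b i = i.val := by
    intro i
    exact congrFun (coe_basisOfLinearIndependentOfCardEqFinrank hTind hTbcard) i
  have hTAcard : (T \ A).card = 2 := by
    rw [Finset.card_sdiff_of_subset hAT, hTcard, hAcard]; omega
  obtain ⟨v, w, hvw, hTA⟩ := Finset.card_eq_two.mp hTAcard
  have hvTA : v ∈ T \ A := by rw [hTA]; simp
  have hwTA : w ∈ T \ A := by rw [hTA]; simp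
  have hvT : v ∈ T := (Finset.mem_sdiff.mp hvTA).1
  have hwT : w ∈ T := (Finset.mem_sdiff.mp hwTA).1
  set jv : {x // x ∈ T} := ⟨v, hvT⟩ with hjv
  set jw : {x // x ∈ T} := ⟨w, hwT⟩ with hjw
  have hjvw : jv ≠ jw := fun h => hvw (congrArg Subtype.val h)
  set lam : (Fin (m + 2) → F) →ₗ[F] F := b.coord jv with hlamdef
  set mu : (Fin (m + 2) → F) →ₗ[F] F := b.coord jw with hmudef
  have hcoord : ∀ (jz : {x // x ∈ T}) i, b.coord jz (b i) = if i = jz then 1 else 0 := by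
    intro jz i
    rw [Module.Basis.coord_apply, Module.Basis.repr_self, Finsupp.single_apply]
  -- expansion of linear forms vanishing on A
  have expand : ∀ β : (Fin (m + 2) → F) →ₗ[F] F, (∀ j, β (p j) = 0) →
      ∀ z, β z = β v * lam z + β w * mu z := by
    intro β hβ z
    have hmain : β = β v • lam + β w • mu := by
      refine b.ext fun i => ?_
      rw [LinearMap.add_apply, LinearMap.smul_apply, LinearMap.smul_apply, smul_eq_mul,
        smul_eq_mul, hlamdef, hmudef, hcoord jv i, hcoord jw i]
      by_cases h1 : i = jv
      · rw [if_pos h1, if_neg (h1 ▸ hjvw), hb i, h1]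
        simp [hjv]
      · by_cases h2 : i = jw
        · rw [if_pos h2, if_neg h1, hb i, h2]
          simp [hjw]
        · rw [if_neg h1, if_neg h2, hb i]
          have hiA : (i : Fin (m + 2) → F) ∈ A := by
            by_contra hia
            have hmem2 : (i : Fin (m + 2) → F) ∈ T \ A := Finset.mem_sdiff.mpr ⟨i.2, hia⟩
            rw [hTA, Finset.mem_insert, Finset.mem_singleton] at hmem2
            rcases hmem2 with h | h
            · exact h1 (Subtype.ext h)
            · exact h2 (Subtype.ext h)
          obtain ⟨j, hj⟩ := (hAmem _).mp hiA
          rw [← hj, hβ j]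
          ring
    have := LinearMap.congr_fun hmain z
    simpa using this
  have hαexp : ∀ i z, α i z = α i v * lam z + α i w * mu z := fun i => expand (α i) (hαA i)
  have hdA : ∀ u z, dA (⇑p) u z = dA (⇑p) u v * lam z + dA (⇑p) u w * mu z := by
    intro u z
    obtain ⟨β, hβ⟩ := aux_dA_linear (m := m) (⇑p) u
    have h1 := expand β (fun j => by rw [hβ (p j)]; exact aux_dA_pj (m := m) (⇑p) u j) z
    simp only [hβ] at h1
    exact h1
  -- arc nonvanishing
  have harc : ∀ u ∈ s, ∀ e ∈ s, u ≠ e → dA (⇑p) u e ≠ 0 := by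
    intro u hu e he hne
    have huE : u ∈ E := (Finset.mem_sdiff.mp hu).1
    have huA : u ∉ A := (Finset.mem_sdiff.mp hu).2
    have heE : e ∈ E := (Finset.mem_sdiff.mp he).1
    have heA : e ∉ A := (Finset.mem_sdiff.mp he).2
    set T' : Finset (Fin (m + 2) → F) := insert u (insert e A) with hT'
    have hT'S : ↑T' ⊆ (↑S : Set (Fin (m + 2) → F)) := by
      intro a ha
      simp only [hT', Finset.coe_insert, Set.mem_insert_iff, Finset.mem_coe] at ha
      rcases ha with rfl | rfl | ha
      · exact hES huE
      · exact hES heE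
      · exact hAsubS ha
    have huIn : u ∉ insert e A := by
      rw [Finset.mem_insert]; rintro (rfl | h); exact hne rfl; exact huA h
    have hT'card : T'.card = m + 2 := by
      rw [hT', Finset.card_insert_of_notMem huIn, Finset.card_insert_of_notMem heA, hAcard]
    have hind := hS T' hT'S hT'card
    set r : Fin (m + 2) → (Fin (m + 2) → F) :=
      ((Fin.cons u (Fin.cons e ⇑p)) : Fin (m + 1 + 1) → (Fin (m + 2) → F)) with hr
    have hrinj : Function.Injective r := by
      rw [hr]
      refine Fin.cons_injective_iff.mpr ⟨?_, Fin.cons_injective_iff.mpr ⟨?_, hpinj⟩⟩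
      · intro hmem
        rw [Fin.range_cons, Set.mem_insert_iff] at hmem
        rcases hmem with h | ⟨j, hj⟩
        · exact hne h
        · exact huA ((hAmem u).mpr ⟨j, hj⟩)
      · rintro ⟨j, hj⟩
        exact heA ((hAmem e).mpr ⟨j, hj⟩)
    have hmemT' : ∀ i, r i ∈ T' := by
      intro i
      have hri : r i ∈ Set.range r := ⟨i, rfl⟩
      rw [hr, Fin.range_cons, Set.mem_insert_iff, Fin.range_cons, Set.mem_insert_iff] at hri
      rw [hT', Finset.mem_insert, Finset.mem_insert]
      rcases hri with h | h | ⟨j, hj⟩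
      · exact Or.inl h
      · exact Or.inr (Or.inl h)
      · exact Or.inr (Or.inr ((hAmem _).mpr ⟨j, hj⟩))
    have hliner : LinearIndependent F r := by
      have hcomp := hind.comp (fun i : Fin (m + 2) => (⟨r i, hmemT' i⟩ : {x // x ∈ T'}))
        (fun i1 i2 hh => hrinj (congrArg Subtype.val hh))
      exact hcomp
    have hunit : IsUnit (Matrix.of r) := Matrix.linearIndependent_rows_iff_isUnit.mp hliner
    have hdet0 : Matrix.det (Matrix.of r) ≠ 0 := ((Matrix.isUnit_iff_isUnit_det _).mp hunit).ne_zero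
    have heq : dA (⇑p) u e = Matrix.det (Matrix.of r) := by
      rw [aux_dA_eq_det (m := m) (⇑p) u e, hr]
      rfl
    rw [heq]
    exact hdet0
  -- pairwise facts
  have hpair2 : ∀ u ∈ s, ∀ e ∈ s, u ≠ e →
      (mu u * lam e - lam u * mu e ≠ 0 ∧
        dA (⇑p) u x / dA (⇑p) u e =
          (mu u * lam x - lam u * mu x) / (mu u * lam e - lam u * mu e)) := by
    intro u hu e he hne
    have hswap := harc e he u hu hne.symm
    have hnzu : ¬(lam u = 0 ∧ mu u = 0) := by
      rintro ⟨h1, h2⟩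
      apply hswap
      rw [hdA e u, h1, h2]; ring
    have hDu : dA (⇑p) u v * lam u + dA (⇑p) u w * mu u = 0 := by
      have h0 := hdA u u
      rw [aux_dA_self (m := m) (⇑p) u] at h0
      linear_combination -h0
    obtain ⟨c, hc1, hc2⟩ : ∃ c : F, dA (⇑p) u v = c * mu u ∧ dA (⇑p) u w = -(c * lam u) := by
      by_cases hl : lam u = 0
      · have hm : mu u ≠ 0 := fun hm => hnzu ⟨hl, hm⟩
        refine ⟨dA (⇑p) u v / mu u, by field_simp, ?_⟩
        have hDw : dA (⇑p) u w * mu u = 0 := by rw [hl] at hDu; linear_combination hDu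
        rcases mul_eq_zero.mp hDw with h | h
        · rw [h, hl]; ring
        · exact absurd h hm
      · refine ⟨-(dA (⇑p) u w) / lam u, ?_, by field_simp⟩
        field_simp
        linear_combination hDu
    have hcross0 : dA (⇑p) u e = c * (mu u * lam e - lam u * mu e) := by
      rw [hdA u e, hc1, hc2]; ring
    have hcne : mu u * lam e - lam u * mu e ≠ 0 := by
      intro h0; exact harc u hu e he hne (by rw [hcross0, h0, mul_zero])
    have hc0 : c ≠ 0 := by
      intro h0; exact harc u hu e he hne (by rw [hcross0, h0, zero_mul])
    refine ⟨hcne, ?_⟩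
    rw [hdA u x, hcross0, hc1, hc2]
    rw [show c * mu u * lam x + -(c * lam u) * mu x = c * (mu u * lam x - lam u * mu x) by ring]
    rw [mul_div_mul_left _ _ hc0]
  -- main computation
  have htlt : t < Fintype.card F := by
    have := Fintype.card_pos (α := F)
    omega
  have hkey := aux_core_general (n := t) s (by rw [hscard]) htlt (⇑lam) (⇑mu)
    (fun u hu e he hne => (hpair2 u hu e he hne).1)
    (fun i => α i v) (fun i => α i w) (lam x) (mu x)
  calc fA x = ∏ i, α i x := hprod x
    _ = ∏ i, (α i v * lam x + α i w * mu x) := Finset.prod_congr rfl fun i _ => hαexp i x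
    _ = ∑ e ∈ s, (∏ i, (α i v * lam e + α i w * mu e)) *
          ∏ u ∈ s.erase e, (mu u * lam x - lam u * mu x) / (mu u * lam e - lam u * mu e) := hkey
    _ = ∑ e ∈ E \ A, fA e * ∏ u ∈ E \ insert e A, dA (⇑p) u x / dA (⇑p) u e := by
        rw [← hsdef]
        refine Finset.sum_congr rfl fun e he => ?_
        have hinner : E \ insert e A = s.erase e := by
          rw [Finset.sdiff_insert, hsdef]
        rw [hinner]
        congr 1
        · rw [hprod e]
          exact Finset.prod_congr rfl fun i _ => (hαexp i e).symm
        · refine Finset.prod_congr rfl fun u hu => ?_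
          exact ((hpair2 u (Finset.mem_of_mem_erase hu) e he (Finset.ne_of_mem_erase hu)).2).symm
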